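/- Let q = p^m with p prime and let 0 ≤ s < m. Let C_1,…,C_l ⊆ F_q^n be linear codes over F_q and let A be a nonsingular l×l matrix over F_q such that A·(A^{(p^{m-s})})^T = diag(λ_1,…,λ_l) with λ_1,…,λ_l all nonzero elements of F_q. Then the s-Galois dual of the matrix-product code satisfies ([C_1,…,C_l]A)^{⊥_s} = [C_1^{⊥_s},…,C_l^{⊥_s}]A. -/
import Mathlib


open Finset Matrix

noncomputable section

/-- The Hamming weight of a vector: the number of nonzero coordinates. -/
def hwt {G : Type*} [Zero G] {κ : Type*} (x : κ → G) : ℕ := Set.ncard {i | x i ≠ 0}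

/-- The linear code `C` has minimum Hamming weight `d`. -/
def minHWt {F : Type*} [Field F] {κ : Type*} (C : Submodule F (κ → F)) (d : ℕ) : Prop :=
  (∃ c ∈ C, c ≠ 0 ∧ hwt c = d) ∧ ∀ c ∈ C, c ≠ 0 → d ≤ hwt c

/-- The minimum Hamming weight (minimum distance) of a linear code. -/
def minDist {F : Type*} [Field F] {κ : Type*} (C : Submodule F (κ → F)) : ℕ :=
  sInf (hwt '' {c | c ∈ C ∧ c ≠ 0})

/-- The Euclidean dual of a linear code. -/
def euclDual {F : Type*} [Field F] {ι : Type*} [Fintype ι] (C : Submodule F (ι → F)) :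
    Submodule F (ι → F) where
  carrier := {x | ∀ c ∈ C, ∑ i, c i * x i = 0}
  add_mem' := by
    intro a b ha hb c hc
    simp only [Set.mem_setOf_eq] at *
    simp [Pi.add_apply, mul_add, Finset.sum_add_distrib, ha c hc, hb c hc]
  zero_mem' := by intro c hc; simp
  smul_mem' := by
    intro r a ha c hc
    simp only [Set.mem_setOf_eq] at *
    simp [Pi.smul_apply, smul_eq_mul, mul_left_comm, ← Finset.mul_sum, ha c hc]

/-- The `s`-Galois dual of a linear code over a field of characteristic `p`:
`{x | ∀ c ∈ C, ∑ i, c i * (x i)^(p^s) = 0}`. -/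
def sGaloisDual {F : Type*} [Field F] {ι : Type*} [Fintype ι]
    (p s : ℕ) [Fact p.Prime] [CharP F p] (C : Submodule F (ι → F)) :
    Submodule F (ι → F) where
  carrier := {x | ∀ c ∈ C, ∑ i, c i * x i ^ p ^ s = 0}
  add_mem' := by
    intro a b ha hb c hc
    simp only [Set.mem_setOf_eq] at *
    have h : ∀ i, ((a + b) i) ^ p ^ s = a i ^ p ^ s + b i ^ p ^ s := fun i => by
      simpa using add_pow_char_pow (a i) (b i) p s
    calc ∑ i, c i * ((a + b) i) ^ p ^ s
        = ∑ i, (c i * a i ^ p ^ s + c i * b i ^ p ^ s) :=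
          Finset.sum_congr rfl fun i _ => by rw [h i, mul_add]
      _ = 0 := by rw [Finset.sum_add_distrib, ha c hc, hb c hc, add_zero]
  zero_mem' := by
    intro c hc
    have hps : p ^ s ≠ 0 := pow_ne_zero _ (Nat.Prime.ne_zero Fact.out)
    simp [zero_pow hps]
  smul_mem' := by
    intro r a ha c hc
    simp only [Set.mem_setOf_eq] at *
    have h : ∀ i, ((r • a) i) ^ p ^ s = r ^ p ^ s * a i ^ p ^ s := fun i => by
      simp [mul_pow]
    calc ∑ i, c i * ((r • a) i) ^ p ^ s
        = ∑ i, r ^ p ^ s * (c i * a i ^ p ^ s) :=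
          Finset.sum_congr rfl fun i _ => by rw [h i]; ring
      _ = 0 := by rw [← Finset.mul_sum, ha c hc, mul_zero]

/-- The `s`-Galois hull of a linear code: `Hull_s(C) = C ∩ C^{⊥_s}`. -/
def sGaloisHull {F : Type*} [Field F] {ι : Type*} [Fintype ι]
    (p s : ℕ) [Fact p.Prime] [CharP F p] (C : Submodule F (ι → F)) :
    Submodule F (ι → F) :=
  C ⊓ sGaloisDual p s C

/-- The matrix-product code `[C_1, …, C_l] A ⊆ F^{t·n}`: codewords are indexed by
`Fin t × Fin n`, with block `j` equal to `∑ u, A u j • c u` for codewords `c u ∈ C u`. -/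
def matrixProductCode {F : Type*} [Field F] {n l t : ℕ}
    (C : Fin l → Submodule F (Fin n → F)) (A : Matrix (Fin l) (Fin t) F) :
    Submodule F (Fin t × Fin n → F) where
  carrier := {x | ∃ c : Fin l → Fin n → F, (∀ u, c u ∈ C u) ∧
      ∀ j i, x (j, i) = ∑ u, A u j * c u i}
  add_mem' := by
    rintro x y ⟨c, hc, hx⟩ ⟨c', hc', hy⟩
    exact ⟨c + c', fun u => (C u).add_mem (hc u) (hc' u), fun j i => by
      simp [hx j i, hy j i, mul_add, Finset.sum_add_distrib]⟩
  zero_mem' := ⟨0, fun u => (C u).zero_mem, fun j i => by simp⟩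
  smul_mem' := by
    rintro r x ⟨c, hc, hx⟩
    refine ⟨r • c, fun u => (C u).smul_mem r (hc u), fun j i => ?_⟩
    simp only [Pi.smul_apply, smul_eq_mul, hx j i, Finset.mul_sum]
    exact Finset.sum_congr rfl fun u _ => by ring

/-- `UA A i` : the code in `F^t` spanned by the first `i` rows of the matrix `A`. -/
def UA {F : Type*} [Field F] {l t : ℕ} (A : Matrix (Fin l) (Fin t) F) (i : ℕ) :
    Submodule F (Fin t → F) :=
  Submodule.span F ((fun u : Fin l => A u) '' {u | (u : ℕ) < i})

/-- The Gabidulin code of dimension `k` associated to `g : Fin m → K`, over a field `K`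
containing a subfield with `q` elements: the row span of the matrix `(g j ^ q ^ i)`. -/
def gabidulin {K : Type*} [Field K] (q : ℕ) {m : ℕ} (k : ℕ) (g : Fin m → K) :
    Submodule K (Fin m → K) :=
  Submodule.span K (Set.range fun i : Fin k => fun j => g j ^ q ^ (i : ℕ))


lemma mem_sGaloisDual {F : Type*} [Field F] {ι : Type*} [Fintype ι]
    (p s : ℕ) [Fact p.Prime] [CharP F p] (C : Submodule F (ι → F)) (x : ι → F) :
    x ∈ sGaloisDual p s C ↔ ∀ c ∈ C, ∑ i, c i * x i ^ p ^ s = 0 := Iff.rfl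

lemma mem_matrixProductCode {F : Type*} [Field F] {n l t : ℕ}
    (C : Fin l → Submodule F (Fin n → F)) (A : Matrix (Fin l) (Fin t) F)
    (x : Fin t × Fin n → F) :
    x ∈ matrixProductCode C A ↔ ∃ c : Fin l → Fin n → F, (∀ u, c u ∈ C u) ∧
      ∀ j i, x (j, i) = ∑ u, A u j * c u i := Iff.rfl

lemma frob_sum {F : Type*} [Field F] {p : ℕ} [Fact p.Prime] [CharP F p] (s : ℕ)
    {ι : Type*} (t : Finset ι) (g : ι → F) :
    (∑ i ∈ t, g i) ^ p ^ s = ∑ i ∈ t, g i ^ p ^ s := by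
  classical
  induction t using Finset.cons_induction with
  | empty => simp [zero_pow (pow_ne_zero s (Nat.Prime.ne_zero (Fact.out : p.Prime)))]
  | cons a t ha ih => rw [Finset.sum_cons, Finset.sum_cons, add_pow_char_pow, ih]

/-- If `A · (A^{(p^{m-s})})ᵀ = diag(λ_1,…,λ_l)` with all `λ_i ≠ 0`, then
`([C_1,…,C_l]A)^{⊥_s} = [C_1^{⊥_s},…,C_l^{⊥_s}]A`. -/
theorem matrixProduct_galois_dual
    {p m s : ℕ} [Fact p.Prime] (hs : s < m)
    {F : Type*} [Field F] [Fintype F] [CharP F p] (hcard : Fintype.card F = p ^ m)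
    {n l : ℕ} (C : Fin l → Submodule F (Fin n → F))
    (A : Matrix (Fin l) (Fin l) F) (hA : IsUnit A)
    (lam : Fin l → F) (hlam : ∀ u, lam u ≠ 0)
    (hdiag : A * (A.map fun x => x ^ p ^ (m - s))ᵀ = Matrix.diagonal lam) :
    sGaloisDual p s (matrixProductCode C A) =
      matrixProductCode (fun u => sGaloisDual p s (C u)) A := by
  classical
  have hps0 : p ^ s ≠ 0 := pow_ne_zero s (Nat.Prime.ne_zero (Fact.out : p.Prime))
  have hpm : ∀ x : F, x ^ p ^ m = x := fun x => by
    rw [← hcard]; exact FiniteField.pow_card x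
  -- orthogonality relations
  have horth : ∀ u v, ∑ j, A u j * (A v j) ^ p ^ s =
      if u = v then lam u ^ p ^ s else 0 := by
    intro u v
    have h1 : ∑ j, A v j * (A u j) ^ p ^ (m - s) =
        if v = u then lam v else 0 := by
      have := congrArg (fun M => M v u) hdiag
      simpa [Matrix.mul_apply, Matrix.transpose_apply, Matrix.map_apply,
        Matrix.diagonal_apply] using this
    have h2 := congrArg (fun x : F => x ^ p ^ s) h1
    simp only [frob_sum, mul_pow, ← pow_mul, ← pow_add] at h2
    rw [Nat.sub_add_cancel hs.le] at h2
    simp only [hpm] at h2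
    calc ∑ j, A u j * A v j ^ p ^ s = ∑ j, A v j ^ p ^ s * A u j :=
          Finset.sum_congr rfl fun j _ => mul_comm _ _
      _ = (if v = u then lam v else 0) ^ p ^ s := h2
      _ = if u = v then lam u ^ p ^ s else 0 := by
          rcases eq_or_ne u v with rfl | h
          · simp
          · simp [h, Ne.symm h, zero_pow hps0]
  -- the key pairing computation
  have hpair : ∀ (c d : Fin l → Fin n → F),
      ∑ x : Fin l × Fin n, (∑ u, A u x.1 * c u x.2) *
          (∑ v, A v x.1 * d v x.2) ^ p ^ s
        = ∑ u, lam u ^ p ^ s * ∑ i, c u i * (d u i) ^ p ^ s := by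
    intro c d
    have step1 : ∀ z : Fin l × Fin n,
        (∑ u, A u z.1 * c u z.2) * (∑ v, A v z.1 * d v z.2) ^ p ^ s
          = ∑ w : Fin l × Fin l,
              (A w.1 z.1 * (A w.2 z.1) ^ p ^ s) * (c w.1 z.2 * (d w.2 z.2) ^ p ^ s) := by
      intro z
      rw [frob_sum, Finset.sum_mul_sum, Fintype.sum_prod_type]
      exact Finset.sum_congr rfl fun u _ => Finset.sum_congr rfl fun v _ => by
        rw [mul_pow]; ring
    have step2 : ∀ w : Fin l × Fin l,
        (∑ z : Fin l × Fin n,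
            (A w.1 z.1 * (A w.2 z.1) ^ p ^ s) * (c w.1 z.2 * (d w.2 z.2) ^ p ^ s))
          = (∑ j, A w.1 j * (A w.2 j) ^ p ^ s) * (∑ i, c w.1 i * (d w.2 i) ^ p ^ s) := by
      intro w
      rw [Finset.sum_mul_sum]
      exact Fintype.sum_prod_type
        (fun z : Fin l × Fin n => (A w.1 z.1 * (A w.2 z.1) ^ p ^ s) * (c w.1 z.2 * (d w.2 z.2) ^ p ^ s))
    calc ∑ z : Fin l × Fin n, (∑ u, A u z.1 * c u z.2) *
            (∑ v, A v z.1 * d v z.2) ^ p ^ s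
        = ∑ z : Fin l × Fin n, ∑ w : Fin l × Fin l,
            (A w.1 z.1 * (A w.2 z.1) ^ p ^ s) * (c w.1 z.2 * (d w.2 z.2) ^ p ^ s) :=
          Finset.sum_congr rfl fun z _ => step1 z
      _ = ∑ w : Fin l × Fin l, ∑ z : Fin l × Fin n,
            (A w.1 z.1 * (A w.2 z.1) ^ p ^ s) * (c w.1 z.2 * (d w.2 z.2) ^ p ^ s) :=
          Finset.sum_comm
      _ = ∑ w : Fin l × Fin l,
            (∑ j, A w.1 j * (A w.2 j) ^ p ^ s) * (∑ i, c w.1 i * (d w.2 i) ^ p ^ s) :=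
          Finset.sum_congr rfl fun w _ => step2 w
      _ = ∑ u, ∑ v, (∑ j, A u j * (A v j) ^ p ^ s) * (∑ i, c u i * (d v i) ^ p ^ s) :=
          Fintype.sum_prod_type _
      _ = ∑ u, lam u ^ p ^ s * ∑ i, c u i * (d u i) ^ p ^ s := by
          refine Finset.sum_congr rfl fun u _ => ?_
          rw [Finset.sum_eq_single u]
          · rw [horth, if_pos rfl]
          · intro v _ hv
            rw [horth, if_neg (Ne.symm hv), zero_mul]
          · intro h; exact absurd (Finset.mem_univ u) h
  have hlam' : ∀ u, lam u ^ p ^ s ≠ 0 := fun u => pow_ne_zero _ (hlam u)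
  ext x
  rw [mem_sGaloisDual, mem_matrixProductCode]
  constructor
  · intro hx
    -- express x via the inverse of Aᵀ
    have hdet : IsUnit (Aᵀ).det := by
      rw [Matrix.det_transpose]; exact (Matrix.isUnit_iff_isUnit_det A).mp hA
    have hAB : Aᵀ * (Aᵀ)⁻¹ = 1 := Matrix.mul_nonsing_inv _ hdet
    set d : Fin l → Fin n → F := fun u i => ∑ k, (Aᵀ)⁻¹ u k * x (k, i) with hd
    have hrec : ∀ j i, x (j, i) = ∑ v, A v j * d v i := by
      intro j i
      simp only [hd, Finset.mul_sum]
      rw [Finset.sum_comm]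
      have hk : ∀ k, (∑ v, A v j * ((Aᵀ)⁻¹ v k * x (k, i)))
          = (Aᵀ * (Aᵀ)⁻¹) j k * x (k, i) := by
        intro k
        rw [Matrix.mul_apply, Finset.sum_mul]
        exact Finset.sum_congr rfl fun v _ => by
          rw [Matrix.transpose_apply]; ring
      rw [Finset.sum_congr rfl fun k _ => hk k]
      simp [hAB, Matrix.one_apply]
    refine ⟨d, ?_, hrec⟩
    intro u c hc
    -- use the MPC codeword supported on coordinate u
    set e : Fin l → Fin n → F := fun w => if w = u then c else 0 with he
    have hy : (fun z : Fin l × Fin n => ∑ w, A w z.1 * e w z.2) ∈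
        matrixProductCode C A := by
      refine ⟨e, fun w => ?_, fun j i => rfl⟩
      rcases eq_or_ne w u with rfl | hw
      · simpa [he] using hc
      · simp only [he, if_neg hw]; exact (C w).zero_mem
    have h0 := hx _ hy
    have h1 : ∑ z : Fin l × Fin n, (∑ w, A w z.1 * e w z.2) *
        (∑ v, A v z.1 * d v z.2) ^ p ^ s = 0 := by
      rw [← h0]
      exact Finset.sum_congr rfl fun z _ => by rw [← hrec z.1 z.2]
    rw [hpair] at h1
    have h2 : ∑ w, lam w ^ p ^ s * ∑ i, e w i * (d w i) ^ p ^ s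
        = lam u ^ p ^ s * ∑ i, c i * (d u i) ^ p ^ s := by
      rw [Finset.sum_eq_single u]
      · simp [he]
      · intro w _ hw
        simp [he, if_neg hw]
      · intro h; exact absurd (Finset.mem_univ u) h
    rw [h2] at h1
    exact (mul_eq_zero.mp h1).resolve_left (hlam' u)
  · rintro ⟨d, hd, hx⟩ y ⟨c, hc, hy⟩
    have heq : ∑ z : Fin l × Fin n, y z * x z ^ p ^ s
        = ∑ z : Fin l × Fin n, (∑ u, A u z.1 * c u z.2) *
            (∑ v, A v z.1 * d v z.2) ^ p ^ s :=
      Finset.sum_congr rfl fun z _ => by rw [← hy z.1 z.2, ← hx z.1 z.2]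
    rw [heq, hpair]
    refine Finset.sum_eq_zero fun u _ => ?_
    rw [hd u _ (hc u), mul_zero]

end
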